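/- (Partition Lemma) Let A and B be finite connected simple graphs with |V(A)| = |V(B)|, and let (g, P_g) be an embedding of A into B. Suppose {X₁, X₂, …, X_p} is a partition of the edge set E(B) such that for each i, deleting the edges of X_i from B leaves exactly two connected components and X_i satisfies conditions (i)–(iii) of the Modified Congestion Lemma with respect to (g, P_g): (i) for every edge {x,y} of A whose endpoints both map into the same component the walk P_g(x,y) contains no edge of X_i; (ii) for every edge {x,y} of A whose endpoints map into different components the walk P_g(x,y) contains exactly one edge of X_i; (iii) the preimage under g of the vertex set of each component has minimum edge boundary in A among all vertex subsets of the same cardinality. Then Σ_{i=1}^{p} EC_g(X_i) = WL(A,B). -/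

import Mathlib

open scoped Classical

/-- Number of edges of `G` with exactly one endpoint in `S`. -/
noncomputable def boundaryCount {V : Type*} [Fintype V] (G : SimpleGraph V)
    (S : Finset V) : ℕ :=
  (G.edgeFinset.filter (fun e => ∃ x y, e = s(x, y) ∧ x ∈ S ∧ y ∉ S)).card

/-- `θ_G(m)`: minimum number of boundary edges over all `m`-subsets. -/
noncomputable def minCut {V : Type*} [Fintype V] (G : SimpleGraph V) (m : ℕ) : ℕ :=
  sInf {c | ∃ S : Finset V, S.card = m ∧ c = boundaryCount G S}

/-- The wirelength `WL(A,B)`: the minimum over all bijections `h` of the total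
distance in `B` between the images of the endpoints of the edges of `A`. -/
noncomputable def wirelength {V W : Type*} [Fintype V] [Fintype W]
    (A : SimpleGraph V) (B : SimpleGraph W) : ℕ :=
  sInf {c | ∃ h : V ≃ W, c = ∑ e ∈ A.edgeFinset,
    Sym2.lift ⟨fun x y => B.dist (h x) (h y),
      fun x y => SimpleGraph.dist_comm⟩ e}

/-- An embedding `(g, P_g)` of a guest graph `A` into a host graph `B`. -/
structure GraphEmbedding {V W : Type*} (A : SimpleGraph V) (B : SimpleGraph W) where
  /-- the vertex bijection -/
  g : V ≃ W
  /-- the walk assigned to each edge of `A` -/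
  walk : ∀ x y, A.Adj x y → B.Walk (g x) (g y)
  /-- the walk depends only on the (unordered) edge -/
  walk_symm : ∀ x y (h : A.Adj x y) (e : Sym2 W),
    e ∈ (walk x y h).edges ↔ e ∈ (walk y x h.symm).edges

/-- Edge congestion `EC_g(e)`. -/
noncomputable def EC {V W : Type*} [Fintype V] {A : SimpleGraph V} {B : SimpleGraph W}
    (f : GraphEmbedding A B) (e : Sym2 W) : ℕ :=
  (A.edgeFinset.filter
    (fun ε => ∃ x y, ∃ h : A.Adj x y, ε = s(x, y) ∧ e ∈ (f.walk x y h).edges)).card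

/-- `EC_g(T)` for a set `T` of edges of `B`. -/
noncomputable def ECset {V W : Type*} [Fintype V] {A : SimpleGraph V} {B : SimpleGraph W}
    (f : GraphEmbedding A B) (T : Finset (Sym2 W)) : ℕ :=
  ∑ e ∈ T, EC f e

/-- Auxiliary separation predicate: the (unordered) pair `ε` has one endpoint
mapped into `S₁` and the other into `S₂`. -/
def sepPred {V W : Type*} (S₁ S₂ : Finset W) (hh : V ≃ W) (ε : Sym2 V) : Prop :=
  ∃ x y, ε = s(x, y) ∧ hh x ∈ S₁ ∧ hh y ∈ S₂

/-- **Partition Lemma.** If the edge set of `B` is partitioned into edge cuts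
`X 1, …, X p`, each of which separates `B` into exactly two connected components
and satisfies conditions (i)–(iii) of the Modified Congestion Lemma with
respect to the embedding `f`, then `∑ i, EC_f(X i) = WL(A,B)`. -/
theorem partition_lemma {V W : Type*} [Fintype V] [Fintype W]
    (A : SimpleGraph V) (B : SimpleGraph W)
    (hA : A.Connected) (hB : B.Connected)
    (hcard : Fintype.card V = Fintype.card W)
    (f : GraphEmbedding A B)
    (p : ℕ) (X : Fin p → Finset (Sym2 W))
    -- `{X 1, …, X p}` is a partition of `E(B)`
    (hXne : ∀ i, (X i).Nonempty)
    (hXdisj : ∀ i j, i ≠ j → Disjoint (X i) (X j))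
    (hXcover : ∀ e, e ∈ B.edgeFinset ↔ ∃ i, e ∈ X i)
    -- the two connected components of `B` minus `X i`
    (S₁ S₂ : Fin p → Finset W)
    (hne₁ : ∀ i, (S₁ i).Nonempty) (hne₂ : ∀ i, (S₂ i).Nonempty)
    (hdisj : ∀ i, Disjoint (S₁ i) (S₂ i))
    (hcover : ∀ i, S₁ i ∪ S₂ i = Finset.univ)
    (hcomp : ∀ i, ∀ x y : W,
      (B.deleteEdges (↑(X i) : Set (Sym2 W))).Reachable x y ↔
        ((x ∈ S₁ i ∧ y ∈ S₁ i) ∨ (x ∈ S₂ i ∧ y ∈ S₂ i)))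
    -- condition (i)
    (hi : ∀ i, ∀ x y (h : A.Adj x y),
      ((f.g x ∈ S₁ i ∧ f.g y ∈ S₁ i) ∨ (f.g x ∈ S₂ i ∧ f.g y ∈ S₂ i)) →
      ∀ e ∈ X i, e ∉ (f.walk x y h).edges)
    -- condition (ii)
    (hii : ∀ i, ∀ x y (h : A.Adj x y), f.g x ∈ S₁ i → f.g y ∈ S₂ i →
      ∃! e, e ∈ X i ∧ e ∈ (f.walk x y h).edges)
    -- condition (iii): the preimages of the components are optimal sets
    (hiii₁ : ∀ i, boundaryCount A ((S₁ i).image f.g.symm) =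
      minCut A ((S₁ i).image f.g.symm).card)
    (hiii₂ : ∀ i, boundaryCount A ((S₂ i).image f.g.symm) =
      minCut A ((S₂ i).image f.g.symm).card) :
    ∑ i, ECset f (X i) = wirelength A B := by
  classical
  -- basic facts about the two sides
  have hside : ∀ i (w : W), w ∈ S₁ i ∨ w ∈ S₂ i := by
    intro i w
    have hw : w ∈ S₁ i ∪ S₂ i := by rw [hcover i]; exact Finset.mem_univ w
    exact Finset.mem_union.mp hw
  have hnot12 : ∀ i (w : W), w ∈ S₁ i → w ∈ S₂ i → False := fun i w h1 h2 =>
    Finset.disjoint_left.mp (hdisj i) h1 h2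
  -- characterization of sepPred on explicit pairs
  have hsep_iff : ∀ (hh : V ≃ W) i (x y : V),
      sepPred (S₁ i) (S₂ i) hh s(x, y) ↔
        (hh x ∈ S₁ i ∧ hh y ∈ S₂ i) ∨ (hh y ∈ S₁ i ∧ hh x ∈ S₂ i) := by
    intro hh i x y
    constructor
    · rintro ⟨a, b, hab, h1, h2⟩
      rw [Sym2.eq_iff] at hab
      rcases hab with ⟨rfl, rfl⟩ | ⟨rfl, rfl⟩
      · exact Or.inl ⟨h1, h2⟩
      · exact Or.inr ⟨h1, h2⟩
    · rintro (⟨h1, h2⟩ | ⟨h1, h2⟩)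
      · exact ⟨x, y, rfl, h1, h2⟩
      · exact ⟨y, x, Sym2.eq_swap.symm, h1, h2⟩
  -- every edge of A has an explicit adjacent representation
  have hrep : ∀ ε ∈ A.edgeFinset, ∃ x y, ∃ _ : A.Adj x y, ε = s(x, y) := by
    intro ε hε
    induction ε using Sym2.ind with
    | _ x y =>
      have hxy : A.Adj x y := by
        have := SimpleGraph.mem_edgeFinset.mp hε
        rwa [SimpleGraph.mem_edgeSet] at this
      exact ⟨x, y, hxy, rfl⟩
  -- the congestion predicate only depends on the unordered edge
  have hwalkP : ∀ (x y : V) (h : A.Adj x y) (e : Sym2 W),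
      (∃ x' y', ∃ h' : A.Adj x' y', s(x, y) = s(x', y') ∧ e ∈ (f.walk x' y' h').edges) ↔
        e ∈ (f.walk x y h).edges := by
    intro x y h e
    constructor
    · rintro ⟨a, b, h', hab, he⟩
      rw [Sym2.eq_iff] at hab
      rcases hab with ⟨rfl, rfl⟩ | ⟨rfl, rfl⟩
      · exact he
      · exact (f.walk_symm x y h e).mpr he
    · intro he
      exact ⟨x, y, h, rfl, he⟩
  -- dichotomy: separated or on the same side
  have hcases : ∀ (hh : V ≃ W) i (x y : V),
      sepPred (S₁ i) (S₂ i) hh s(x, y) ∨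
        ((hh x ∈ S₁ i ∧ hh y ∈ S₁ i) ∨ (hh x ∈ S₂ i ∧ hh y ∈ S₂ i)) := by
    intro hh i x y
    rcases hside i (hh x) with hx | hx <;> rcases hside i (hh y) with hy | hy
    · exact Or.inr (Or.inl ⟨hx, hy⟩)
    · exact Or.inl ((hsep_iff hh i x y).mpr (Or.inl ⟨hx, hy⟩))
    · exact Or.inl ((hsep_iff hh i x y).mpr (Or.inr ⟨hy, hx⟩))
    · exact Or.inr (Or.inr ⟨hx, hy⟩)
  -- for a separated cut, the walk crosses it in a unique edge
  have huniq_walk : ∀ i (x y : V) (h : A.Adj x y),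
      sepPred (S₁ i) (S₂ i) f.g s(x, y) →
        ∃! e, e ∈ X i ∧ e ∈ (f.walk x y h).edges := by
    intro i x y h hs
    rcases (hsep_iff f.g i x y).mp hs with ⟨h1, h2⟩ | ⟨h1, h2⟩
    · exact hii i x y h h1 h2
    · obtain ⟨e₀, ⟨heX, hew⟩, hu⟩ := hii i y x h.symm h1 h2
      exact ⟨e₀, ⟨heX, (f.walk_symm x y h e₀).mpr hew⟩,
        fun e he => hu e ⟨he.1, (f.walk_symm x y h e).mp he.2⟩⟩
  -- counting the crossing edges of one cut for one edge of A
  have hcount : ∀ i (x y : V) (h : A.Adj x y),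
      ((X i).filter (fun e => e ∈ (f.walk x y h).edges)).card =
        if sepPred (S₁ i) (S₂ i) f.g s(x, y) then 1 else 0 := by
    intro i x y h
    by_cases hs : sepPred (S₁ i) (S₂ i) f.g s(x, y)
    · rw [if_pos hs]
      obtain ⟨e₀, ⟨heX, hew⟩, hu⟩ := huniq_walk i x y h hs
      rw [Finset.card_eq_one]
      refine ⟨e₀, Finset.eq_singleton_iff_unique_mem.mpr
        ⟨Finset.mem_filter.mpr ⟨heX, hew⟩, ?_⟩⟩
      intro e he
      rw [Finset.mem_filter] at he
      exact hu e ⟨he.1, he.2⟩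
    · rw [if_neg hs, Finset.card_eq_zero, Finset.filter_eq_empty_iff]
      intro e heX
      have hss : (f.g x ∈ S₁ i ∧ f.g y ∈ S₁ i) ∨ (f.g x ∈ S₂ i ∧ f.g y ∈ S₂ i) := by
        rcases hcases f.g i x y with hc | hc
        · exact absurd hc hs
        · exact hc
      exact hi i x y h hss e heX
  -- congestion of one cut as a sum over the edges of A
  have hEC2 : ∀ i, ECset f (X i) =
      (A.edgeFinset.filter (fun ε => sepPred (S₁ i) (S₂ i) f.g ε)).card := by
    intro i
    have step1 : ECset f (X i) = ∑ e ∈ X i, ∑ ε ∈ A.edgeFinset,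
        (if ∃ x y, ∃ h : A.Adj x y, ε = s(x, y) ∧ e ∈ (f.walk x y h).edges
          then 1 else 0) := by
      unfold ECset EC
      exact Finset.sum_congr rfl fun e _ => Finset.card_filter _ _
    rw [step1, Finset.sum_comm, Finset.card_filter]
    refine Finset.sum_congr rfl fun ε hε => ?_
    obtain ⟨x, y, hadj, rfl⟩ := hrep ε hε
    have : ∑ e ∈ X i,
        (if ∃ x' y', ∃ h' : A.Adj x' y', s(x, y) = s(x', y') ∧
            e ∈ (f.walk x' y' h').edges then 1 else 0) =
        ((X i).filter (fun e => e ∈ (f.walk x y hadj).edges)).card := by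
      rw [Finset.card_filter]
      refine Finset.sum_congr rfl fun e _ => ?_
      by_cases he : e ∈ (f.walk x y hadj).edges
      · rw [if_pos ((hwalkP x y hadj e).mpr he), if_pos he]
      · rw [if_neg (fun hc => he ((hwalkP x y hadj e).mp hc)), if_neg he]
    rw [this, hcount i x y hadj]
  -- boundary count in terms of the separation predicate
  have hmemim : ∀ (hh : V ≃ W) i (z : V),
      z ∈ (S₁ i).image hh.symm ↔ hh z ∈ S₁ i := by
    intro hh i z
    constructor
    · rintro hz
      obtain ⟨a, ha, rfl⟩ := Finset.mem_image.mp hz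
      simpa using ha
    · intro hz
      exact Finset.mem_image.mpr ⟨hh z, hz, Equiv.symm_apply_apply hh z⟩
  have hbd : ∀ (hh : V ≃ W) i,
      (A.edgeFinset.filter (fun ε => sepPred (S₁ i) (S₂ i) hh ε)).card =
        boundaryCount A ((S₁ i).image hh.symm) := by
    intro hh i
    unfold boundaryCount
    congr 1
    refine Finset.filter_congr fun ε _ => ?_
    constructor
    · rintro ⟨x, y, rfl, h1, h2⟩
      exact ⟨x, y, rfl, (hmemim hh i x).mpr h1,
        fun hy => hnot12 i (hh y) ((hmemim hh i y).mp hy) h2⟩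
    · rintro ⟨x, y, rfl, hx, hy⟩
      have h1 : hh x ∈ S₁ i := (hmemim hh i x).mp hx
      have h2 : hh y ∈ S₂ i := by
        rcases hside i (hh y) with h | h
        · exact absurd ((hmemim hh i y).mpr h) hy
        · exact h
      exact ⟨x, y, rfl, h1, h2⟩
  -- distance lower bound: the number of separating cuts
  have hdistle : ∀ (hh : V ≃ W) (x y : V),
      (Finset.univ.filter (fun i => sepPred (S₁ i) (S₂ i) hh s(x, y))).card ≤
        B.dist (hh x) (hh y) := by
    intro hh x y
    obtain ⟨q, hq⟩ := hB.exists_walk_length_eq_dist (hh x) (hh y)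
    rw [← hq, ← SimpleGraph.Walk.length_edges]
    have hex : ∀ i ∈ Finset.univ.filter
        (fun i => sepPred (S₁ i) (S₂ i) hh s(x, y)),
        ∃ e, e ∈ q.edges ∧ e ∈ X i := by
      intro i hi'
      by_contra hcon
      push_neg at hcon
      have hreach : (B.deleteEdges (↑(X i) : Set (Sym2 W))).Reachable (hh x) (hh y) :=
        ⟨q.toDeleteEdges _ (fun e he => by simpa using hcon e he)⟩
      rw [hcomp i] at hreach
      have hsep := (Finset.mem_filter.mp hi').2
      rcases (hsep_iff hh i x y).mp hsep with ⟨h1, h2⟩ | ⟨h1, h2⟩ <;>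
        rcases hreach with ⟨ha, hb⟩ | ⟨ha, hb⟩
      · exact hnot12 i (hh y) hb h2
      · exact hnot12 i (hh x) h1 ha
      · exact hnot12 i (hh x) ha h2
      · exact hnot12 i (hh y) h1 hb
    calc (Finset.univ.filter (fun i => sepPred (S₁ i) (S₂ i) hh s(x, y))).card
        ≤ q.edges.toFinset.card := by
          refine Finset.card_le_card_of_injOn
            (fun i => if hc : ∃ e, e ∈ q.edges ∧ e ∈ X i then hc.choose
              else s(hh x, hh x)) (fun i hi' => ?_) ?_
          · have hc := hex i hi'
            simp only [dif_pos hc, List.mem_toFinset]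
            exact List.mem_toFinset.mpr hc.choose_spec.1
          · intro i hi' j hj' hij
            have hci := hex i (Finset.mem_coe.mp hi')
            have hcj := hex j (Finset.mem_coe.mp hj')
            simp only [dif_pos hci, dif_pos hcj] at hij
            by_contra hne
            exact Finset.disjoint_left.mp (hXdisj i j hne)
              hci.choose_spec.2 (hij ▸ hcj.choose_spec.2)
        _ ≤ q.edges.length := List.toFinset_card_le _
  -- distance upper bound: the number of separating cuts (for the embedding g)
  have hdistge : ∀ (x y : V) (h : A.Adj x y),
      B.dist (f.g x) (f.g y) ≤
        (Finset.univ.filter (fun i => sepPred (S₁ i) (S₂ i) f.g s(x, y))).card := by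
    intro x y h
    set w := f.walk x y h with hw
    have hp : w.bypass.IsPath := w.bypass_isPath
    have hsub : w.bypass.edges ⊆ w.edges := w.edges_bypass_subset
    have hsep_of : ∀ i e, e ∈ X i → e ∈ w.edges →
        sepPred (S₁ i) (S₂ i) f.g s(x, y) := by
      intro i e heX hew
      rcases hcases f.g i x y with hc | hc
      · exact hc
      · exact absurd hew (hi i x y h hc e heX)
    calc B.dist (f.g x) (f.g y) ≤ w.bypass.length := SimpleGraph.dist_le _
      _ = w.bypass.edges.length := (SimpleGraph.Walk.length_edges _).symm
      _ = w.bypass.edges.toFinset.card :=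
          (List.toFinset_card_of_nodup hp.edges_nodup).symm
      _ ≤ (Finset.univ.filter (fun i => sepPred (S₁ i) (S₂ i) f.g s(x, y))).card := by
          refine Finset.card_le_card_of_surjOn
            (fun i => if hc : ∃ e, e ∈ X i ∧ e ∈ w.edges then hc.choose
              else s(f.g x, f.g x)) ?_
          intro e he
          rw [Finset.mem_coe, List.mem_toFinset] at he
          have hew : e ∈ w.edges := hsub he
          have heB : e ∈ B.edgeFinset := by
            rw [SimpleGraph.mem_edgeFinset]
            exact w.edges_subset_edgeSet hew
          obtain ⟨i, hiX⟩ := (hXcover e).mp heB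
          have hsepi : sepPred (S₁ i) (S₂ i) f.g s(x, y) := hsep_of i e hiX hew
          refine ⟨i, Finset.mem_coe.mpr (Finset.mem_filter.mpr ⟨Finset.mem_univ i, hsepi⟩), ?_⟩
          have hc : ∃ e', e' ∈ X i ∧ e' ∈ w.edges := ⟨e, hiX, hew⟩
          show (if hc : ∃ e', e' ∈ X i ∧ e' ∈ w.edges then hc.choose
              else s(f.g x, f.g x)) = e
          rw [dif_pos hc]
          obtain ⟨e₀, he₀, hu⟩ := huniq_walk i x y h hsepi
          rw [hu hc.choose hc.choose_spec, hu e ⟨hiX, hew⟩]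
    done
  -- double counting
  have htot : ∀ (hh : V ≃ W),
      ∑ ε ∈ A.edgeFinset,
        (Finset.univ.filter (fun i => sepPred (S₁ i) (S₂ i) hh ε)).card =
      ∑ i, (A.edgeFinset.filter (fun ε => sepPred (S₁ i) (S₂ i) hh ε)).card := by
    intro hh
    simp_rw [Finset.card_filter]
    exact Finset.sum_comm
  -- the total congestion equals the total distance for g
  have hub : ∑ i, ECset f (X i) = ∑ ε ∈ A.edgeFinset,
      Sym2.lift ⟨fun x y => B.dist (f.g x) (f.g y),
        fun x y => SimpleGraph.dist_comm⟩ ε := by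
    rw [Finset.sum_congr rfl (fun i _ => hEC2 i), ← htot f.g]
    refine Finset.sum_congr rfl fun ε hε => ?_
    obtain ⟨x, y, hadj, rfl⟩ := hrep ε hε
    rw [Sym2.lift_mk]
    exact le_antisymm (hdistle f.g x y) (hdistge x y hadj)
  -- lower bound for arbitrary bijections
  have hlb : ∀ (hh : V ≃ W), ∑ i, ECset f (X i) ≤ ∑ ε ∈ A.edgeFinset,
      Sym2.lift ⟨fun x y => B.dist (hh x) (hh y),
        fun x y => SimpleGraph.dist_comm⟩ ε := by
    intro hh
    have hcard_im : ∀ i, ((S₁ i).image hh.symm).card = ((S₁ i).image f.g.symm).card := by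
      intro i
      rw [Finset.card_image_of_injective _ hh.symm.injective,
        Finset.card_image_of_injective _ f.g.symm.injective]
    calc ∑ i, ECset f (X i)
        = ∑ i, minCut A ((S₁ i).image f.g.symm).card := by
          refine Finset.sum_congr rfl fun i _ => ?_
          rw [hEC2 i, hbd f.g i, hiii₁ i]
      _ ≤ ∑ i, boundaryCount A ((S₁ i).image hh.symm) := by
          refine Finset.sum_le_sum fun i _ => ?_
          exact Nat.sInf_le ⟨(S₁ i).image hh.symm, hcard_im i, rfl⟩
      _ = ∑ i, (A.edgeFinset.filter (fun ε => sepPred (S₁ i) (S₂ i) hh ε)).card := by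
          exact Finset.sum_congr rfl fun i _ => (hbd hh i).symm
      _ = ∑ ε ∈ A.edgeFinset,
            (Finset.univ.filter (fun i => sepPred (S₁ i) (S₂ i) hh ε)).card :=
          (htot hh).symm
      _ ≤ ∑ ε ∈ A.edgeFinset, Sym2.lift ⟨fun x y => B.dist (hh x) (hh y),
            fun x y => SimpleGraph.dist_comm⟩ ε := by
          refine Finset.sum_le_sum fun ε hε => ?_
          obtain ⟨x, y, hadj, rfl⟩ := hrep ε hε
          rw [Sym2.lift_mk]
          exact hdistle hh x y
  -- conclude
  refine le_antisymm ?_ ?_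
  · refine le_csInf ⟨_, f.g, rfl⟩ ?_
    rintro c ⟨hh, rfl⟩
    exact hlb hh
  · exact Nat.sInf_le ⟨f.g, hub⟩
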